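/- Consider n unit-time jobs scheduled consecutively on one machine (job in position i completes at time i). For a permutation π of [n] and due dates d : [n] → ℕ, job j is late if its completion time exceeds d(j). Suppose the job set consists of pairs {J_j, J'_j} for j = 1,...,n', with 2n' jobs total, and under every scenario the due dates of J_j and J'_j both lie in {2j-1, 2j}. If a permutation π does not place, for every j, the jobs {J_j, J'_j} in positions 2j-1 and 2j, then under every scenario at least one job in π is late. -/

import Mathlib

/-- Unit-time jobs come in pairs `(j, b)`; the job in position `i` (0-indexed)
completes at time `i+1`. Under every scenario the due dates of the two jobs of
pair `j` lie in `{2j+1, 2j+2}` (1-indexed: `{2j-1, 2j}`). Any permutation not of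
the block form has a late job under every scenario. -/
theorem stmt14 (n' : ℕ) (Ξ : Type)
    (π : (Fin n' × Bool) ≃ Fin (2 * n'))
    (d : Ξ → (Fin n' × Bool) → ℕ)
    (hd : ∀ ξ j, d ξ j = 2 * (j.1 : ℕ) + 1 ∨ d ξ j = 2 * (j.1 : ℕ) + 2)
    (hnotblock : ¬ ∀ j : Fin n' × Bool,
      (π j : ℕ) = 2 * (j.1 : ℕ) ∨ (π j : ℕ) = 2 * (j.1 : ℕ) + 1) :
    ∀ ξ : Ξ, ∃ j : Fin n' × Bool, d ξ j < (π j : ℕ) + 1 := by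
  have key : ∃ j : Fin n' × Bool, 2 * (j.1 : ℕ) + 2 ≤ (π j : ℕ) := by
    by_contra h
    push_neg at h
    apply hnotblock
    intro j
    suffices hge : 2 * (j.1 : ℕ) ≤ (π j : ℕ) by
      have := h j; omega
    set k : ℕ := (j.1 : ℕ) with hk
    have hklt : k < n' := j.1.isLt
    have h2k : 2 * k < 2 * n' := by omega
    let A : Finset (Fin n' × Bool) := Finset.univ.filter (fun p => (p.1 : ℕ) < k)
    have hAcard : A.card = 2 * k := by
      have : A = (Finset.Iio j.1) ×ˢ (Finset.univ : Finset Bool) := by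
        ext p
        simp only [A, Finset.mem_filter, Finset.mem_univ, true_and,
          Finset.mem_product, Finset.mem_Iio, Fin.lt_def, hk, and_true]
      rw [this, Finset.card_product, Fin.card_Iio]
      simp [mul_comm, hk]
    have himg : A.image π = Finset.Iio (⟨2 * k, h2k⟩ : Fin (2 * n')) := by
      apply Finset.eq_of_subset_of_card_le
      · intro i hi
        simp only [A, Finset.mem_image, Finset.mem_filter] at hi
        obtain ⟨p, ⟨-, hp⟩, rfl⟩ := hi
        have := h p
        simp only [Finset.mem_Iio, Fin.lt_def]
        omega
      · rw [Fin.card_Iio, Finset.card_image_of_injective _ π.injective, hAcard]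
    have hjA : j ∉ A := by simp [A, hk]
    have : π j ∉ Finset.Iio (⟨2 * k, h2k⟩ : Fin (2 * n')) := by
      rw [← himg]
      intro hmem
      obtain ⟨p, hp, hpe⟩ := Finset.mem_image.mp hmem
      exact hjA (π.injective hpe ▸ hp)
    simpa [Fin.lt_def] using this
  obtain ⟨j, hj⟩ := key
  intro ξ
  exact ⟨j, by rcases hd ξ j with h | h <;> omega⟩
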